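/- The family {T_m}, indexed by the multiset partitions m of {1^{λ_1},…,s^{λ_s},1'^{λ_1},…,s'^{λ_s}} of rank at most n, is a basis of the F-vector space of S_n-equivariant linear endomorphisms of F[M(n,λ)] (≅ End_{S_n}(Sym^λ(F^n))). -/

import Mathlib

/-- `M(n,k)`: the set of `n`-tuples of non-negative integers summing to `k`. -/
abbrev Mnk (n k : ℕ) : Type := {a : Fin n → ℕ // ∑ i, a i = k}

instance (n k : ℕ) : Fintype (Mnk n k) :=
  Fintype.subtype (Finset.Nat.antidiagonalTuple n k) fun _ =>
    Finset.Nat.mem_antidiagonalTuple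

/-- `M(n,λ)`: `s × n` matrices of non-negative integers whose `i`-th row sums to `λ_i`,
encoded row by row. -/
abbrev Mlam (n : ℕ) {s : ℕ} (lam : Fin s → ℕ) : Type := (i : Fin s) → Mnk n (lam i)

/-- The multiset of column pairs `{(A^{(j)}, B^{(j)}) : 1 ≤ j ≤ n}` of a pair of matrices
`A, B ∈ M(n,λ)`. -/
def colEfull {n s : ℕ} {lam : Fin s → ℕ} (A B : Mlam n lam) :
    Multiset ((Fin s → ℕ) × (Fin s → ℕ)) :=
  Multiset.map (fun j => (fun i => (A i).1 j, fun i => (B i).1 j)) Finset.univ.val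

/-- `E(A,B)`: the multiset of column pairs of `(A, B)` with all copies of the zero pair
removed. -/
def Elam {n s : ℕ} {lam : Fin s → ℕ} (A B : Mlam n lam) :
    Multiset ((Fin s → ℕ) × (Fin s → ℕ)) :=
  (colEfull A B).filter fun p => p ≠ (0, 0)

/-- A multiset partition of `{1^{λ_1},…,s^{λ_s},1'^{λ_1},…,s'^{λ_s}}`, encoded as a
multiset of pairs `(I,J)` of vectors in `ℤ_{≥0}^s`, each pair `≠ (0,0)`, with the `I`'s
summing to `λ` and the `J`'s summing to `λ`. -/
def IsMSPlam {s : ℕ} (lam : Fin s → ℕ)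
    (m : Multiset ((Fin s → ℕ) × (Fin s → ℕ))) : Prop :=
  ((0, 0) : (Fin s → ℕ) × (Fin s → ℕ)) ∉ m ∧
    (m.map Prod.fst).sum = lam ∧ (m.map Prod.snd).sum = lam

/-- The action of a permutation `w ∈ S_n` on `M(n,k)`: `(w • a)_i = a_{w⁻¹(i)}`. -/
def permA {n k : ℕ} (w : Equiv.Perm (Fin n)) (a : Mnk n k) : Mnk n k :=
  ⟨fun i => a.1 (w⁻¹ i), (Equiv.sum_comp w⁻¹ a.1).trans a.2⟩

/-- The action of `w ∈ S_n` on `M(n,λ)` by permuting columns: `(w • A)_{ij} = A_{i,w⁻¹(j)}`. -/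
def permMl {n s : ℕ} {lam : Fin s → ℕ} (w : Equiv.Perm (Fin n)) (A : Mlam n lam) :
    Mlam n lam := fun i => permA w (A i)

/-- The integral operator `T_m` on `F[M(n,λ)]`, determined by
`T_m(1_A) = Σ_{B : E(A,B) = m} 1_B`. -/
def Tml (F : Type) [Field F] (n : ℕ) {s : ℕ} (lam : Fin s → ℕ)
    (m : Multiset ((Fin s → ℕ) × (Fin s → ℕ))) :
    Module.End F (Mlam n lam → F) where
  toFun f B := ∑ A : Mlam n lam, if Elam A B = m then f A else 0
  map_add' f g := by
    funext B
    simp only [Pi.add_apply]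
    rw [← Finset.sum_add_distrib]
    refine Finset.sum_congr rfl fun A _ => ?_
    by_cases h : Elam A B = m <;> simp [h]
  map_smul' c f := by
    funext B
    simp only [RingHom.id_apply, Pi.smul_apply, smul_eq_mul]
    rw [Finset.mul_sum]
    refine Finset.sum_congr rfl fun A _ => ?_
    by_cases h : Elam A B = m <;> simp [h]

/-- The space of `S_n`-equivariant linear endomorphisms of `F[M(n,λ)] ≅ Sym^λ(F^n)`. -/
def EquivariantEndLam (F : Type) [Field F] (n : ℕ) {s : ℕ} (lam : Fin s → ℕ) :
    Submodule F (Module.End F (Mlam n lam → F)) where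
  carrier := {T | ∀ (w : Equiv.Perm (Fin n)) (f : Mlam n lam → F) (A : Mlam n lam),
    T (fun X => f (permMl w X)) A = T f (permMl w A)}
  add_mem' := fun hT hS w f A => by
    simp only [LinearMap.add_apply, Pi.add_apply]
    rw [hT w f A, hS w f A]
  zero_mem' := fun w f A => by simp
  smul_mem' := fun c T hT w f A => by
    simp only [LinearMap.smul_apply, Pi.smul_apply]
    rw [hT w f A]

section Aux
variable {F : Type} [Field F] {n s : ℕ} {lam : Fin s → ℕ}

lemma exists_comp_perm {α : Type*} : ∀ {n : ℕ} (f g : Fin n → α),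
    List.Perm (List.ofFn f) (List.ofFn g) → ∃ σ : Equiv.Perm (Fin n), g = f ∘ σ
  | 0, f, g, _ => ⟨1, funext fun i => i.elim0⟩
  | n + 1, f, g, h => by
    have hg0 : g 0 ∈ List.ofFn f := h.symm.subset (by simp [List.mem_ofFn])
    obtain ⟨k, hk⟩ := List.mem_ofFn.1 hg0
    set τ : Equiv.Perm (Fin (n + 1)) := Equiv.swap 0 k with hτ
    have hperm : List.Perm (List.ofFn (f ∘ τ)) (List.ofFn g) :=
      (τ.ofFn_comp_perm f).trans h
    have hhead : (f ∘ τ) 0 = g 0 := by simp [hτ, Equiv.swap_apply_left, hk]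
    rw [List.ofFn_succ, List.ofFn_succ, hhead] at hperm
    have htail := hperm.cons_inv
    obtain ⟨σ', hσ'⟩ := exists_comp_perm _ _ htail
    refine ⟨(Equiv.Perm.decomposeFin.symm (0, σ')).trans τ, ?_⟩
    funext i
    induction i using Fin.cases with
    | zero => simpa [Equiv.Perm.decomposeFin_symm_apply_zero] using hhead.symm
    | succ j =>
      have := congrFun hσ' j
      simpa [Equiv.Perm.decomposeFin_symm_apply_succ] using this

lemma colEfull_ofFn (A B : Mlam n lam) :
    colEfull A B = ↑(List.ofFn fun j => ((fun i => (A i).1 j, fun i => (B i).1 j) :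
      (Fin s → ℕ) × (Fin s → ℕ))) := by
  rw [colEfull, Fin.univ_val_map]

lemma colEfull_perm (w : Equiv.Perm (Fin n)) (A B : Mlam n lam) :
    colEfull (permMl w A) (permMl w B) = colEfull A B := by
  simp only [colEfull, permMl, permA]
  have : Multiset.map (⇑w⁻¹) (Finset.univ.val : Multiset (Fin n)) = Finset.univ.val := by
    rw [Fin.univ_def]
    exact Multiset.coe_eq_coe.2 ((w⁻¹).map_finRange_perm)
  conv_rhs => rw [← this, Multiset.map_map]
  rfl

lemma Elam_perm (w : Equiv.Perm (Fin n)) (A B : Mlam n lam) :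
    Elam (permMl w A) (permMl w B) = Elam A B := by
  rw [Elam, Elam, colEfull_perm]

lemma card_colEfull (A B : Mlam n lam) : Multiset.card (colEfull A B) = n := by
  rw [colEfull]; simp

lemma colEfull_eq_of_Elam_eq {A B A' B' : Mlam n lam} (h : Elam A B = Elam A' B') :
    colEfull A B = colEfull A' B' := by
  have key : ∀ (X Y : Mlam n lam), colEfull X Y =
      Elam X Y + Multiset.replicate (n - Multiset.card (Elam X Y))
        ((0,0) : (Fin s → ℕ) × (Fin s → ℕ)) := by
    intro X Y
    have h1 := Multiset.filter_add_not (fun p => p ≠ (0,0)) (colEfull X Y)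
    have h2 : Multiset.filter (fun p => ¬ p ≠ (0,0)) (colEfull X Y) =
        Multiset.replicate (Multiset.card (Multiset.filter (fun p => ¬ p ≠ (0,0))
          (colEfull X Y))) ((0,0) : (Fin s → ℕ) × (Fin s → ℕ)) := by
      rw [Multiset.eq_replicate_card]
      intro b hb
      simpa using (Multiset.of_mem_filter hb)
    have hcard : Multiset.card (Multiset.filter (fun p => ¬ p ≠ (0,0)) (colEfull X Y)) =
        n - Multiset.card (Elam X Y) := by
      have := congrArg Multiset.card h1
      rw [Multiset.card_add, card_colEfull] at this
      simp only [Elam]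
      omega
    rw [← h1, h2, hcard]; rfl
  rw [key A B, key A' B', h]

lemma exists_perm_of_Elam_eq {A B A' B' : Mlam n lam} (h : Elam A B = Elam A' B') :
    ∃ w : Equiv.Perm (Fin n), A' = permMl w A ∧ B' = permMl w B := by
  have hcol := colEfull_eq_of_Elam_eq h
  rw [colEfull_ofFn, colEfull_ofFn, Multiset.coe_eq_coe] at hcol
  obtain ⟨σ, hσ⟩ := exists_comp_perm _ _ hcol
  refine ⟨σ⁻¹, ?_, ?_⟩ <;>
  · funext i
    apply Subtype.ext
    funext j
    have := congrFun hσ j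
    simp only [Function.comp] at this
    have h1 := congrFun (congrArg Prod.fst this) i
    have h2 := congrFun (congrArg Prod.snd this) i
    simp only [permMl, permA, inv_inv]
    first
    | exact h1
    | exact h2

end Aux

section Aux2
variable {F : Type} [Field F] {n s : ℕ} {lam : Fin s → ℕ}

lemma colEfull_decomp (A B : Mlam n lam) :
    colEfull A B = Elam A B + Multiset.replicate (n - Multiset.card (Elam A B))
      ((0,0) : (Fin s → ℕ) × (Fin s → ℕ)) := by
  have h1 := Multiset.filter_add_not (fun p => p ≠ (0,0)) (colEfull A B)
  have h2 : Multiset.filter (fun p => ¬ p ≠ (0,0)) (colEfull A B) =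
      Multiset.replicate (Multiset.card (Multiset.filter (fun p => ¬ p ≠ (0,0))
        (colEfull A B))) ((0,0) : (Fin s → ℕ) × (Fin s → ℕ)) := by
    rw [Multiset.eq_replicate_card]
    intro b hb
    simpa using (Multiset.of_mem_filter hb)
  have hcard : Multiset.card (Multiset.filter (fun p => ¬ p ≠ (0,0)) (colEfull A B)) =
      n - Multiset.card (Elam A B) := by
    have := congrArg Multiset.card h1
    rw [Multiset.card_add, card_colEfull] at this
    simp only [Elam]
    omega
  conv_lhs => rw [← h1]
  rw [h2, hcard]; rfl

lemma card_Elam_le (A B : Mlam n lam) : Multiset.card (Elam A B) ≤ n := by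
  have := congrArg Multiset.card (colEfull_decomp A B)
  rw [card_colEfull, Multiset.card_add] at this
  omega

lemma sum_map_apply {Y : Type*} (m : Multiset Y) (h : Y → (Fin s → ℕ)) (i : Fin s) :
    (m.map h).sum i = (m.map (fun p => h p i)).sum := by
  rw [show (m.map h).sum i = (Pi.evalAddMonoidHom (fun _ : Fin s => ℕ) i) (m.map h).sum from rfl,
    AddMonoidHom.map_multiset_sum, Multiset.map_map]
  rfl

lemma sum_map_colEfull_fst (A B : Mlam n lam) (i : Fin s) :
    ((colEfull A B).map Prod.fst).sum i = lam i := by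
  rw [sum_map_apply, colEfull, Multiset.map_map]
  have : ∀ j : Fin n, ((fun p : (Fin s → ℕ) × (Fin s → ℕ) => p.1 i) ∘
      (fun j => ((fun i => (A i).1 j, fun i => (B i).1 j) :
        (Fin s → ℕ) × (Fin s → ℕ)))) j = (A i).1 j := fun j => rfl
  rw [show Multiset.map _ Finset.univ.val = Multiset.map (fun j : Fin n => (A i).1 j)
    Finset.univ.val from Multiset.map_congr rfl (fun j _ => this j)]
  exact (A i).2

lemma sum_map_colEfull_snd (A B : Mlam n lam) (i : Fin s) :
    ((colEfull A B).map Prod.snd).sum i = lam i := by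
  rw [sum_map_apply, colEfull, Multiset.map_map]
  have : ∀ j : Fin n, ((fun p : (Fin s → ℕ) × (Fin s → ℕ) => p.2 i) ∘
      (fun j => ((fun i => (A i).1 j, fun i => (B i).1 j) :
        (Fin s → ℕ) × (Fin s → ℕ)))) j = (B i).1 j := fun j => rfl
  rw [show Multiset.map _ Finset.univ.val = Multiset.map (fun j : Fin n => (B i).1 j)
    Finset.univ.val from Multiset.map_congr rfl (fun j _ => this j)]
  exact (B i).2

lemma Elam_fst_sum (A B : Mlam n lam) : ((Elam A B).map Prod.fst).sum = lam := by
  funext i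
  have h := sum_map_colEfull_fst A B i
  rw [colEfull_decomp A B, Multiset.map_add, Multiset.sum_add, Multiset.map_replicate] at h
  simpa [Multiset.sum_replicate] using h

lemma Elam_snd_sum (A B : Mlam n lam) : ((Elam A B).map Prod.snd).sum = lam := by
  funext i
  have h := sum_map_colEfull_snd A B i
  rw [colEfull_decomp A B, Multiset.map_add, Multiset.sum_add, Multiset.map_replicate] at h
  simpa [Multiset.sum_replicate] using h

lemma Elam_isMSP (A B : Mlam n lam) : IsMSPlam lam (Elam A B) :=
  ⟨fun h => by simpa using Multiset.of_mem_filter h, Elam_fst_sum A B, Elam_snd_sum A B⟩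

end Aux2

section Aux3
variable {F : Type} [Field F] {n s : ℕ} {lam : Fin s → ℕ}

lemma exists_rep (m : Multiset ((Fin s → ℕ) × (Fin s → ℕ)))
    (hm : IsMSPlam lam m) (hc : Multiset.card m ≤ n) :
    ∃ A B : Mlam n lam, Elam A B = m := by
  classical
  set M : Multiset ((Fin s → ℕ) × (Fin s → ℕ)) :=
    m + Multiset.replicate (n - Multiset.card m) (0, 0) with hM
  set l : List ((Fin s → ℕ) × (Fin s → ℕ)) := M.toList with hl
  have hlen : l.length = n := by
    rw [hl, Multiset.length_toList, hM, Multiset.card_add, Multiset.card_replicate]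
    omega
  have hlcoe : (↑l : Multiset ((Fin s → ℕ) × (Fin s → ℕ))) = M := Multiset.coe_toList M
  -- the function giving columns
  set f : Fin n → (Fin s → ℕ) × (Fin s → ℕ) := fun j => l.get (Fin.cast hlen.symm j) with hf
  have hofFn : List.ofFn f = l := by
    apply List.ext_get (by simp [hlen])
    intro i h1 h2
    rw [List.get_ofFn]
    rfl
  have hmapuniv : Multiset.map f Finset.univ.val = M := by
    rw [Fin.univ_val_map, hofFn, hlcoe]
  -- row sums
  have hsum1 : ∀ i, ∑ j, (f j).1 i = lam i := by
    intro i
    have : ∑ j, (f j).1 i = ((Multiset.map f Finset.univ.val).map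
        (fun p => p.1 i)).sum := by
      rw [Multiset.map_map]; rfl
    rw [this, hmapuniv, hM, Multiset.map_add, Multiset.sum_add, Multiset.map_replicate,
      Multiset.sum_replicate]
    have := congrFun hm.2.1 i
    rw [← this, sum_map_apply]
    simp
  have hsum2 : ∀ i, ∑ j, (f j).2 i = lam i := by
    intro i
    have : ∑ j, (f j).2 i = ((Multiset.map f Finset.univ.val).map
        (fun p => p.2 i)).sum := by
      rw [Multiset.map_map]; rfl
    rw [this, hmapuniv, hM, Multiset.map_add, Multiset.sum_add, Multiset.map_replicate,
      Multiset.sum_replicate]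
    have := congrFun hm.2.2 i
    rw [← this, sum_map_apply]
    simp
  refine ⟨fun i => ⟨fun j => (f j).1 i, hsum1 i⟩, fun i => ⟨fun j => (f j).2 i, hsum2 i⟩, ?_⟩
  have hcol : colEfull (fun i => (⟨fun j => (f j).1 i, hsum1 i⟩ : Mnk n (lam i)))
      (fun i => (⟨fun j => (f j).2 i, hsum2 i⟩ : Mnk n (lam i))) = M := by
    rw [colEfull, ← hmapuniv]
  rw [Elam, hcol, hM, Multiset.filter_add]
  have h1 : Multiset.filter (fun p => p ≠ ((0,0) : (Fin s → ℕ) × (Fin s → ℕ))) m = m := by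
    rw [Multiset.filter_eq_self]
    intro a ha h
    exact hm.1 (h ▸ ha)
  have h2 : Multiset.filter (fun p => p ≠ ((0,0) : (Fin s → ℕ) × (Fin s → ℕ)))
      (Multiset.replicate (n - Multiset.card m) ((0,0) : (Fin s → ℕ) × (Fin s → ℕ))) = 0 := by
    rw [Multiset.filter_eq_nil]
    intro a ha h
    exact h (Multiset.eq_of_mem_replicate ha)
  rw [h1, h2, add_zero]

end Aux3

section Aux4
variable {F : Type} [Field F] {n s : ℕ} {lam : Fin s → ℕ}

/-- permMl as an equivalence. -/
def permMlE (w : Equiv.Perm (Fin n)) : Mlam n lam ≃ Mlam n lam where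
  toFun := permMl w
  invFun := permMl w⁻¹
  left_inv A := by
    funext i
    apply Subtype.ext
    funext j
    simp [permMl, permA]
  right_inv A := by
    funext i
    apply Subtype.ext
    funext j
    simp [permMl, permA]

lemma mem_equivariant_iff {F : Type} [Field F] (T : Module.End F (Mlam n lam → F)) :
    T ∈ EquivariantEndLam F n lam ↔
      ∀ (w : Equiv.Perm (Fin n)) (f : Mlam n lam → F) (A : Mlam n lam),
        T (fun X => f (permMl w X)) A = T f (permMl w A) := Iff.rfl

lemma Tml_mem (m : Multiset ((Fin s → ℕ) × (Fin s → ℕ))) :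
    Tml F n lam m ∈ EquivariantEndLam F n lam := by
  rw [mem_equivariant_iff]
  intro w f A
  show (∑ A' : Mlam n lam, if Elam A' A = m then f (permMl w A') else 0) =
    ∑ A' : Mlam n lam, if Elam A' (permMl w A) = m then f A' else 0
  refine Fintype.sum_equiv (permMlE (lam := lam) w) _ _ fun A' => ?_
  have : Elam (permMlE (lam := lam) w A') (permMl w A) = Elam A' A := Elam_perm w A' A
  rw [this]
  rfl

/-- Indicator function. -/
def delta (A : Mlam n lam) : Mlam n lam → F := fun X => if X = A then 1 else 0

lemma expand_apply (T : Module.End F (Mlam n lam → F)) (f : Mlam n lam → F) (B : Mlam n lam) :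
    T f B = ∑ A : Mlam n lam, f A * T (delta A) B := by
  classical
  have hf : f = ∑ A : Mlam n lam, f A • delta A := by
    funext X
    rw [Finset.sum_apply]
    simp only [Pi.smul_apply, delta, smul_eq_mul, mul_ite, mul_one, mul_zero]
    rw [Finset.sum_ite_eq Finset.univ X f]
    simp
  conv_lhs => rw [hf]
  rw [map_sum]
  rw [Finset.sum_apply]
  refine Finset.sum_congr rfl fun A _ => ?_
  rw [map_smul]
  rfl

lemma equivariant_delta_perm (T : Module.End F (Mlam n lam → F))
    (hT : T ∈ EquivariantEndLam F n lam) (w : Equiv.Perm (Fin n)) (A B : Mlam n lam) :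
    T (delta (permMl w A)) (permMl w B) = T (delta A) B := by
  rw [mem_equivariant_iff] at hT
  rw [← hT w (delta (permMl w A)) B]
  have hfun : (fun X : Mlam n lam => (delta (F := F) (permMl w A)) (permMl w X)) = delta A := by
    funext X
    simp only [delta]
    congr 1
    simp only [eq_iff_iff]
    constructor
    · intro h
      exact (permMlE (lam := lam) w).injective h
    · intro h
      rw [h]
  rw [hfun]

lemma equivariant_delta_eq (T : Module.End F (Mlam n lam → F))
    (hT : T ∈ EquivariantEndLam F n lam) {A B A' B' : Mlam n lam}
    (h : Elam A B = Elam A' B') : T (delta A') B' = T (delta A) B := by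
  obtain ⟨w, hA, hB⟩ := exists_perm_of_Elam_eq h
  rw [hA, hB, equivariant_delta_perm T hT]

lemma Tml_delta (m : Multiset ((Fin s → ℕ) × (Fin s → ℕ))) (A B : Mlam n lam) :
    Tml F n lam m (delta A) B = if Elam A B = m then 1 else 0 := by
  classical
  show (∑ A' : Mlam n lam, if Elam A' B = m then delta A A' else 0) = _
  have : ∀ A' : Mlam n lam, (if Elam A' B = m then (delta A A' : F) else 0) =
      if A' = A then (if Elam A B = m then 1 else 0) else 0 := by
    intro A'
    by_cases h : A' = A
    · subst h; simp [delta]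
    · simp [delta, h]
  rw [Finset.sum_congr rfl fun A' _ => this A']
  rw [Finset.sum_ite_eq' Finset.univ A]
  simp

end Aux4


/-- The family `{T_m}`, indexed by the multiset partitions `m` of
`{1^{λ_1},…,s^{λ_s},1'^{λ_1},…,s'^{λ_s}}` of rank at most `n`, is a basis of the space of
`S_n`-equivariant linear endomorphisms of `F[M(n,λ)] ≅ Sym^λ(F^n)`. -/
theorem stmt10 (F : Type) [Field F] (n : ℕ) (hn : 0 < n) {s : ℕ} (lam : Fin s → ℕ) :
    ∃ B : Module.Basis {m : Multiset ((Fin s → ℕ) × (Fin s → ℕ)) //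
        IsMSPlam lam m ∧ Multiset.card m ≤ n} F (EquivariantEndLam F n lam),
      ∀ m, (B m : Module.End F (Mlam n lam → F)) = Tml F n lam m.1 := by
  classical
  set Idx := {m : Multiset ((Fin s → ℕ) × (Fin s → ℕ)) //
    IsMSPlam lam m ∧ Multiset.card m ≤ n} with hIdx
  haveI : Fintype Idx := Fintype.ofSurjective
    (fun p : Mlam n lam × Mlam n lam =>
      (⟨Elam p.1 p.2, Elam_isMSP p.1 p.2, card_Elam_le p.1 p.2⟩ : Idx))
    (fun m => by
      obtain ⟨A, B, h⟩ := exists_rep m.1 m.2.1 m.2.2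
      exact ⟨(A, B), Subtype.ext h⟩)
  have hex : ∀ m : Idx, ∃ p : Mlam n lam × Mlam n lam, Elam p.1 p.2 = m.1 := fun m => by
    obtain ⟨A, B, h⟩ := exists_rep m.1 m.2.1 m.2.2
    exact ⟨(A, B), h⟩
  choose rep hrep using hex
  -- the forward linear map
  set toL : (Idx → F) →ₗ[F] EquivariantEndLam F n lam :=
    { toFun := fun c => ⟨∑ m : Idx, c m • Tml F n lam m.1,
        Submodule.sum_mem _ fun m _ => Submodule.smul_mem _ _ (Tml_mem m.1)⟩,
      map_add' := by
        intro c d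
        apply Subtype.ext
        simp [add_smul, Finset.sum_add_distrib],
      map_smul' := by
        intro a c
        apply Subtype.ext
        simp [mul_smul, Finset.smul_sum] } with htoL
  set invL : EquivariantEndLam F n lam →ₗ[F] (Idx → F) :=
    { toFun := fun T => fun m => (T : Module.End F (Mlam n lam → F)) (delta (rep m).1) (rep m).2,
      map_add' := by intro T S; funext m; simp,
      map_smul' := by intro a T; funext m; simp } with hinvL
  have hleft : ∀ c : Idx → F, invL (toL c) = c := by
    intro c
    funext m
    show (∑ m' : Idx, c m' • Tml F n lam m'.1) (delta (rep m).1) (rep m).2 = c m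
    rw [LinearMap.sum_apply, Finset.sum_apply]
    have : ∀ m' : Idx, (c m' • Tml F n lam m'.1) (delta (rep m).1) (rep m).2 =
        if m' = m then c m' else 0 := by
      intro m'
      rw [LinearMap.smul_apply, Pi.smul_apply, smul_eq_mul, Tml_delta, hrep m]
      by_cases h : m' = m
      · subst h; simp
      · have : ¬ (m.1 = m'.1) := fun hh => h (Subtype.ext hh.symm)
        simp [h, this]
    rw [Finset.sum_congr rfl fun m' _ => this m']
    rw [Finset.sum_eq_single m (fun b _ hb => if_neg hb) (fun h => absurd (Finset.mem_univ m) h),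
      if_pos rfl]
  have hright : ∀ T : EquivariantEndLam F n lam, toL (invL T) = T := by
    intro T
    apply Subtype.ext
    apply LinearMap.ext
    intro f
    funext B
    show (∑ m : Idx, ((T : Module.End F (Mlam n lam → F)) (delta (rep m).1) (rep m).2) •
      Tml F n lam m.1) f B = (T : Module.End F (Mlam n lam → F)) f B
    rw [LinearMap.sum_apply, Finset.sum_apply]
    have step1 : ∀ m : Idx, (((T : Module.End F (Mlam n lam → F)) (delta (rep m).1) (rep m).2) •
        Tml F n lam m.1) f B = ∑ A : Mlam n lam,
          if Elam A B = m.1 then ((T : Module.End F (Mlam n lam → F)) (delta (rep m).1)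
            (rep m).2) * f A else 0 := by
      intro m
      rw [LinearMap.smul_apply, Pi.smul_apply, smul_eq_mul]
      show ((T : Module.End F (Mlam n lam → F)) (delta (rep m).1) (rep m).2) *
        (∑ A : Mlam n lam, if Elam A B = m.1 then f A else 0) = _
      rw [Finset.mul_sum]
      exact Finset.sum_congr rfl fun A _ => by rw [mul_ite, mul_zero]
    rw [Finset.sum_congr rfl fun m _ => step1 m, Finset.sum_comm]
    have step2 : ∀ A : Mlam n lam, (∑ m : Idx,
        if Elam A B = m.1 then ((T : Module.End F (Mlam n lam → F)) (delta (rep m).1)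
          (rep m).2) * f A else 0) =
        ((T : Module.End F (Mlam n lam → F)) (delta A) B) * f A := by
      intro A
      set m0 : Idx := ⟨Elam A B, Elam_isMSP A B, card_Elam_le A B⟩ with hm0
      have : ∀ m : Idx, (if Elam A B = m.1 then ((T : Module.End F (Mlam n lam → F))
          (delta (rep m).1) (rep m).2) * f A else 0) =
          if m = m0 then ((T : Module.End F (Mlam n lam → F)) (delta (rep m).1) (rep m).2) *
            f A else 0 := by
        intro m
        congr 1
        simp only [eq_iff_iff]
        constructor
        · intro h; exact Subtype.ext (by rw [hm0, ← h])
        · intro h; rw [h, hm0]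
      rw [Finset.sum_congr rfl fun m _ => this m, Finset.sum_ite_eq' Finset.univ m0]
      simp only [Finset.mem_univ, if_true]
      congr 1
      refine equivariant_delta_eq _ T.2 ?_
      rw [hrep m0]
    rw [Finset.sum_congr rfl fun A _ => step2 A]
    rw [expand_apply (T : Module.End F (Mlam n lam → F)) f B]
    exact Finset.sum_congr rfl fun A _ => mul_comm _ _
  set e : (Idx → F) ≃ₗ[F] EquivariantEndLam F n lam :=
    LinearEquiv.ofLinear toL invL (LinearMap.ext hright) (LinearMap.ext hleft) with he
  refine ⟨(Pi.basisFun F Idx).map e, ?_⟩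
  intro m
  have : (Pi.basisFun F Idx).map e m = e (Pi.basisFun F Idx m) := Module.Basis.map_apply _ _ _
  rw [this]
  have hsingle : (Pi.basisFun F Idx) m = Pi.single m 1 := by
    ext m'
    rw [Pi.basisFun_apply]
  rw [hsingle]
  show (∑ m' : Idx, (Pi.single m (1:F) : Idx → F) m' • Tml F n lam m'.1) = Tml F n lam m.1
  rw [Finset.sum_eq_single m (fun m' _ h => by rw [Pi.single_eq_of_ne h, zero_smul])
    (fun h => absurd (Finset.mem_univ m) h)]
  rw [Pi.single_eq_same, one_smul]
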